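/- arXiv:math/0501338 — 3 statements merged into one kernel-verified Lean document; each statement's English description precedes it below -/
import Mathlib

section
/- Every 2×2 integer matrix with determinant 1 all of whose entries are nonnegative can be written as a finite product of copies of the matrices T₁ and T₂ (with the identity matrix corresponding to the empty product). -/
/-- The matrix `T₁` with rows `(1,1), (0,1)`. -/
def T1 : Matrix (Fin 2) (Fin 2) ℤ := !![1, 1; 0, 1]

/-- The matrix `T₂` with rows `(1,0), (1,1)`. -/
def T2 : Matrix (Fin 2) (Fin 2) ℤ := !![1, 0; 1, 1]

/-- Every 2×2 integer matrix with determinant 1 and nonnegative entries is a finite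
product of copies of `T₁` and `T₂` (the identity being the empty product). -/
theorem unimodular_nonneg_matrix_eq_prod_of_T1_T2
    (M : Matrix (Fin 2) (Fin 2) ℤ) (hdet : M.det = 1) (hpos : ∀ i j, 0 ≤ M i j) :
    ∃ L : List (Matrix (Fin 2) (Fin 2) ℤ),
      (∀ A ∈ L, A = T1 ∨ A = T2) ∧ L.prod = M := by
  suffices H : ∀ n : ℕ, ∀ M : Matrix (Fin 2) (Fin 2) ℤ, M.det = 1 →
      (∀ i j, 0 ≤ M i j) → (M 0 0 + M 0 1 + M 1 0 + M 1 1).toNat ≤ n →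
      ∃ L : List (Matrix (Fin 2) (Fin 2) ℤ),
        (∀ A ∈ L, A = T1 ∨ A = T2) ∧ L.prod = M by
    exact H _ M hdet hpos le_rfl
  intro n
  induction n with
  | zero =>
    intro M hdet hpos hsum
    rw [Matrix.det_fin_two] at hdet
    have h00 := hpos 0 0; have h01 := hpos 0 1
    have h10 := hpos 1 0; have h11 := hpos 1 1
    have e00 : M 0 0 = 0 := by omega
    have e11 : M 1 1 = 0 := by omega
    rw [e00, e11] at hdet
    simp at hdet
    have : M 0 1 * M 1 0 = -1 := by omega
    nlinarith
  | succ n ih =>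
    intro M hdet hpos hsum
    have hd : M 0 0 * M 1 1 - M 0 1 * M 1 0 = 1 := by
      rw [Matrix.det_fin_two] at hdet; exact hdet
    have h00 := hpos 0 0; have h01 := hpos 0 1
    have h10 := hpos 1 0; have h11 := hpos 1 1
    by_cases hbd : M 1 1 ≤ M 0 1
    · -- peel off T1
      have hca : M 1 0 < M 0 0 := by nlinarith
      set M' : Matrix (Fin 2) (Fin 2) ℤ :=
        !![M 0 0 - M 1 0, M 0 1 - M 1 1; M 1 0, M 1 1] with hM'
      have det' : M'.det = 1 := by
        rw [hM', Matrix.det_fin_two_of]; linear_combination hd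
      have pos' : ∀ i j, 0 ≤ M' i j := by
        intro i j
        fin_cases i <;> fin_cases j <;>
          simp [hM'] <;> omega
      have hcd : 0 < M 1 0 + M 1 1 := by
        by_contra hc
        have e1 : M 1 0 = 0 := by omega
        have e2 : M 1 1 = 0 := by omega
        rw [e1, e2] at hd; simp at hd
      have sum' : (M' 0 0 + M' 0 1 + M' 1 0 + M' 1 1).toNat ≤ n := by
        have e : M' 0 0 = M 0 0 - M 1 0 ∧ M' 0 1 = M 0 1 - M 1 1 ∧
            M' 1 0 = M 1 0 ∧ M' 1 1 = M 1 1 := by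
          refine ⟨?_, ?_, ?_, ?_⟩ <;> simp [hM']
        omega
      obtain ⟨L, hL, hLp⟩ := ih M' det' pos' sum'
      refine ⟨T1 :: L, ?_, ?_⟩
      · intro A hA
        rcases List.mem_cons.mp hA with h | h
        · exact Or.inl h
        · exact hL A h
      · rw [List.prod_cons, hLp]
        ext i j
        fin_cases i <;> fin_cases j <;>
          simp [T1, hM', Matrix.mul_apply, Fin.sum_univ_two] <;> ring
    · push_neg at hbd
      by_cases hac : M 0 0 ≤ M 1 0
      · -- peel off T2
        set M' : Matrix (Fin 2) (Fin 2) ℤ :=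
          !![M 0 0, M 0 1; M 1 0 - M 0 0, M 1 1 - M 0 1] with hM'
        have det' : M'.det = 1 := by
          rw [hM', Matrix.det_fin_two_of]; linear_combination hd
        have pos' : ∀ i j, 0 ≤ M' i j := by
          intro i j
          fin_cases i <;> fin_cases j <;>
            simp [hM'] <;> omega
        have hab : 0 < M 0 0 + M 0 1 := by
          by_contra hc
          have e1 : M 0 0 = 0 := by omega
          have e2 : M 0 1 = 0 := by omega
          rw [e1, e2] at hd; simp at hd
        have sum' : (M' 0 0 + M' 0 1 + M' 1 0 + M' 1 1).toNat ≤ n := by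
          have e : M' 0 0 = M 0 0 ∧ M' 0 1 = M 0 1 ∧
              M' 1 0 = M 1 0 - M 0 0 ∧ M' 1 1 = M 1 1 - M 0 1 := by
            refine ⟨?_, ?_, ?_, ?_⟩ <;> simp [hM']
          omega
        obtain ⟨L, hL, hLp⟩ := ih M' det' pos' sum'
        refine ⟨T2 :: L, ?_, ?_⟩
        · intro A hA
          rcases List.mem_cons.mp hA with h | h
          · exact Or.inr h
          · exact hL A h
        · rw [List.prod_cons, hLp]
          ext i j
          fin_cases i <;> fin_cases j <;>
            simp [T2, hM', Matrix.mul_apply, Fin.sum_univ_two] <;> ring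
      · -- M is the identity
        push_neg at hac
        have h1 : (M 1 0 + 1) * (M 0 1 + 1) ≤ M 0 0 * M 1 1 :=
          mul_le_mul (by omega) (by omega) (by omega) (by omega)
        have hbc : M 0 1 + M 1 0 ≤ 0 := by nlinarith
        have eb : M 0 1 = 0 := by omega
        have ec : M 1 0 = 0 := by omega
        have had : M 0 0 * M 1 1 = 1 := by
          rw [eb, ec] at hd; omega
        have ea : M 0 0 = 1 := by nlinarith
        have ed : M 1 1 = 1 := by nlinarith
        refine ⟨[], by simp, ?_⟩
        rw [List.prod_nil]
        ext i j
        fin_cases i <;> fin_cases j <;>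
          simp [Matrix.one_apply, ea, eb, ec, ed]
end

section
/- The monoid of 2×2 integer matrices with determinant 1 and nonnegative entries is a free monoid on the two generators T₁ and T₂: the monoid homomorphism from the free monoid on two generators to 2×2 integer matrices sending the first generator to T₁ and the second to T₂ is injective, and its image is exactly the set of determinant-1 matrices with nonnegative entries. -/
/-- The monoid homomorphism from the free monoid on two generators to 2×2 integer
matrices sending the first generator to `T₁` and the second one to `T₂`. -/
def toMatrix : FreeMonoid (Fin 2) →* Matrix (Fin 2) (Fin 2) ℤ :=
  FreeMonoid.lift fun i => if i = 0 then T1 else T2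

def Good (M : Matrix (Fin 2) (Fin 2) ℤ) : Prop := M.det = 1 ∧ ∀ i j, 0 ≤ M i j

lemma T1_mul (A : Matrix (Fin 2) (Fin 2) ℤ) :
    T1 * A = !![A 0 0 + A 1 0, A 0 1 + A 1 1; A 1 0, A 1 1] := by
  ext i j
  fin_cases i <;> fin_cases j <;> simp [T1, Matrix.mul_apply, Fin.sum_univ_two]
lemma T2_mul (A : Matrix (Fin 2) (Fin 2) ℤ) :
    T2 * A = !![A 0 0, A 0 1; A 0 0 + A 1 0, A 0 1 + A 1 1] := by
  ext i j
  fin_cases i <;> fin_cases j <;> simp [T2, Matrix.mul_apply, Fin.sum_univ_two]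

lemma good_iff (M : Matrix (Fin 2) (Fin 2) ℤ) :
    Good M ↔ (M 0 0 * M 1 1 - M 0 1 * M 1 0 = 1 ∧
      0 ≤ M 0 0 ∧ 0 ≤ M 0 1 ∧ 0 ≤ M 1 0 ∧ 0 ≤ M 1 1) := by
  constructor
  · rintro ⟨hd, hn⟩
    rw [Matrix.det_fin_two] at hd
    exact ⟨hd, hn 0 0, hn 0 1, hn 1 0, hn 1 1⟩
  · rintro ⟨hd, h0, h1, h2, h3⟩
    refine ⟨by rw [Matrix.det_fin_two]; exact hd, fun i j => ?_⟩
    fin_cases i <;> fin_cases j <;> assumption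

lemma trichotomy (M : Matrix (Fin 2) (Fin 2) ℤ) (hM : Good M) :
    M = 1 ∨
    (∃ N, Good N ∧ M = T1 * N ∧
      N 0 0 + N 0 1 + N 1 0 + N 1 1 < M 0 0 + M 0 1 + M 1 0 + M 1 1) ∨
    (∃ N, Good N ∧ M = T2 * N ∧
      N 0 0 + N 0 1 + N 1 0 + N 1 1 < M 0 0 + M 0 1 + M 1 0 + M 1 1) := by
  rw [good_iff] at hM
  obtain ⟨hd, h0, h1, h2, h3⟩ := hM
  set a := M 0 0 with ha; set b := M 0 1 with hb
  set c := M 1 0 with hc; set d := M 1 1 with hdd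
  rcases lt_trichotomy (a + b) (c + d) with h | h | h
  · -- T2 case: c ≥ a, d ≥ b
    right; right
    have hca : a ≤ c := by
      by_contra hac
      push_neg at hac
      have hbd : d ≥ b + 1 := by omega
      nlinarith
    have hdb : b ≤ d := by
      by_contra hbd
      push_neg at hbd
      have hca' : c ≥ a + 1 := by omega
      have key : a + b ≤ 1 := by nlinarith
      have : (a = 0 ∧ b = 0) ∨ (a = 1 ∧ b = 0) ∨ (a = 0 ∧ b = 1) := by omega
      rcases this with ⟨ha', hb'⟩ | ⟨ha', hb'⟩ | ⟨ha', hb'⟩ <;> rw [ha', hb'] at hd <;> omega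
    refine ⟨!![a, b; c - a, d - b], ?_, ?_, ?_⟩
    · rw [good_iff]
      refine ⟨by simp; linear_combination hd, by simp; omega⟩
    · rw [T2_mul, Matrix.eta_fin_two M]
      rw [← ha, ← hb, ← hc, ← hdd]
      ext i j; fin_cases i <;> fin_cases j <;> simp
    · simp only [Matrix.of_apply, Matrix.cons_val', Matrix.cons_val_zero, Matrix.cons_val_one, Matrix.head_cons, Matrix.empty_val', Matrix.cons_val_fin_one, Matrix.head_fin_const]
      have : ¬ (a = 0 ∧ b = 0) := by rintro ⟨ha', hb'⟩; rw [ha', hb'] at hd; omega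
      omega
  · -- M = 1
    left
    have key : (a + b) * (a - c) = 1 := by linear_combination hd + a * h
    have : a = 1 ∧ b = 0 ∧ c = 0 ∧ d = 1 := by
      rcases Int.mul_eq_one_iff_eq_one_or_neg_one.mp key with ⟨h1', h2'⟩ | ⟨h1', h2'⟩ <;> omega
    obtain ⟨e1, e2, e3, e4⟩ := this
    rw [Matrix.eta_fin_two M, ← ha, ← hb, ← hc, ← hdd, e1, e2, e3, e4, Matrix.one_fin_two]
  · -- T1 case: a ≥ c, b ≥ d
    right; left
    have hca : c ≤ a := by
      by_contra hac
      push_neg at hac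
      have hbd : b ≥ d + 1 := by omega
      nlinarith
    have hdb : d ≤ b := by
      by_contra hbd
      push_neg at hbd
      have hca' : a ≥ c + 1 := by omega
      have key : c + d ≤ 1 := by nlinarith
      have : (c = 0 ∧ d = 0) ∨ (c = 1 ∧ d = 0) ∨ (c = 0 ∧ d = 1) := by omega
      rcases this with ⟨ha', hb'⟩ | ⟨ha', hb'⟩ | ⟨ha', hb'⟩ <;> rw [ha', hb'] at hd <;> omega
    refine ⟨!![a - c, b - d; c, d], ?_, ?_, ?_⟩
    · rw [good_iff]
      refine ⟨by simp; ring_nf; ring_nf at hd ⊢; linarith [hd], by simp; omega⟩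
    · rw [T1_mul, Matrix.eta_fin_two M]
      rw [← ha, ← hb, ← hc, ← hdd]
      ext i j; fin_cases i <;> fin_cases j <;> simp
    · simp only [Matrix.of_apply, Matrix.cons_val', Matrix.cons_val_zero, Matrix.cons_val_one, Matrix.head_cons, Matrix.empty_val', Matrix.cons_val_fin_one, Matrix.head_fin_const]
      have : ¬ (c = 0 ∧ d = 0) := by rintro ⟨ha', hb'⟩; rw [ha', hb'] at hd; omega
      omega

lemma good_one : Good (1 : Matrix (Fin 2) (Fin 2) ℤ) := by
  rw [good_iff]; norm_num

lemma good_mul {A B : Matrix (Fin 2) (Fin 2) ℤ} (hA : Good A) (hB : Good B) :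
    Good (A * B) := by
  refine ⟨by rw [Matrix.det_mul, hA.1, hB.1, one_mul], fun i j => ?_⟩
  rw [Matrix.mul_apply]
  exact Finset.sum_nonneg fun k _ => mul_nonneg (hA.2 i k) (hB.2 k j)

lemma good_T1 : Good T1 := by rw [good_iff]; norm_num [T1]
lemma good_T2 : Good T2 := by rw [good_iff]; norm_num [T2]

lemma toMatrix_of (i : Fin 2) : toMatrix (FreeMonoid.of i) = if i = 0 then T1 else T2 :=
  FreeMonoid.lift_eval_of _ i

lemma good_toMatrix (w : FreeMonoid (Fin 2)) : Good (toMatrix w) := by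
  induction w using FreeMonoid.recOn with
  | one => simpa using good_one
  | of_mul x xs ih =>
      rw [map_mul, toMatrix_of]
      split
      · exact good_mul good_T1 ih
      · exact good_mul good_T2 ih

lemma top_pos {A : Matrix (Fin 2) (Fin 2) ℤ} (hA : Good A) : 1 ≤ A 0 0 + A 0 1 := by
  rw [good_iff] at hA
  obtain ⟨hd, h0, h1, h2, h3⟩ := hA
  by_contra hcon
  have e0 : A 0 0 = 0 := by omega
  have e1 : A 0 1 = 0 := by omega
  rw [e0, e1] at hd
  omega

lemma bot_pos {A : Matrix (Fin 2) (Fin 2) ℤ} (hA : Good A) : 1 ≤ A 1 0 + A 1 1 := by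
  rw [good_iff] at hA
  obtain ⟨hd, h0, h1, h2, h3⟩ := hA
  by_contra hcon
  have e0 : A 1 0 = 0 := by omega
  have e1 : A 1 1 = 0 := by omega
  rw [e0, e1] at hd
  omega

/-- row-sum difference discriminator -/
def rd (M : Matrix (Fin 2) (Fin 2) ℤ) : ℤ := M 0 0 + M 0 1 - M 1 0 - M 1 1

lemma rd_T1 {A : Matrix (Fin 2) (Fin 2) ℤ} (hA : Good A) : 0 < rd (T1 * A) := by
  have := top_pos hA
  rw [T1_mul, rd]; simp; omega

lemma rd_T2 {A : Matrix (Fin 2) (Fin 2) ℤ} (hA : Good A) : rd (T2 * A) < 0 := by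
  have := bot_pos hA
  rw [T2_mul, rd]; simp; omega

lemma rd_one : rd (1 : Matrix (Fin 2) (Fin 2) ℤ) = 0 := by
  rw [rd]; simp

lemma T1_cancel {A B : Matrix (Fin 2) (Fin 2) ℤ} (h : T1 * A = T1 * B) : A = B := by
  rw [T1_mul, T1_mul] at h
  have h00 := congrFun (congrFun h 0) 0
  have h01 := congrFun (congrFun h 0) 1
  have h10 := congrFun (congrFun h 1) 0
  have h11 := congrFun (congrFun h 1) 1
  simp at h00 h01 h10 h11
  have e00 : A 0 0 = B 0 0 := by omega
  have e01 : A 0 1 = B 0 1 := by omega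
  rw [Matrix.eta_fin_two A, Matrix.eta_fin_two B, h10, h11, e00, e01]

lemma T2_cancel {A B : Matrix (Fin 2) (Fin 2) ℤ} (h : T2 * A = T2 * B) : A = B := by
  rw [T2_mul, T2_mul] at h
  have h00 := congrFun (congrFun h 0) 0
  have h01 := congrFun (congrFun h 0) 1
  have h10 := congrFun (congrFun h 1) 0
  have h11 := congrFun (congrFun h 1) 1
  simp at h00 h01 h10 h11
  have e10 : A 1 0 = B 1 0 := by omega
  have e11 : A 1 1 = B 1 1 := by omega
  rw [Matrix.eta_fin_two A, Matrix.eta_fin_two B, h00, h01, e10, e11]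

lemma toMatrix_inj : Function.Injective ⇑toMatrix := by
  intro w1
  induction w1 using FreeMonoid.recOn with
  | one =>
      intro w2 h
      induction w2 using FreeMonoid.recOn with
      | one => rfl
      | of_mul y ys _ =>
          exfalso
          rw [map_one, map_mul, toMatrix_of] at h
          have hB := good_toMatrix ys
          fin_cases y <;> simp at h
          · have := rd_T1 hB; rw [← h, rd_one] at this; exact lt_irrefl _ this
          · have := rd_T2 hB; rw [← h, rd_one] at this; exact lt_irrefl _ this
  | of_mul x xs ih =>
      intro w2 h
      induction w2 using FreeMonoid.recOn with
      | one =>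
          exfalso
          rw [map_one, map_mul, toMatrix_of] at h
          have hA := good_toMatrix xs
          fin_cases x <;> simp at h
          · have := rd_T1 hA; rw [h, rd_one] at this; exact lt_irrefl _ this
          · have := rd_T2 hA; rw [h, rd_one] at this; exact lt_irrefl _ this
      | of_mul y ys _ =>
          rw [map_mul, map_mul, toMatrix_of, toMatrix_of] at h
          have hA := good_toMatrix xs
          have hB := good_toMatrix ys
          fin_cases x <;> fin_cases y <;> simp at h ⊢
          · exact ih (T1_cancel h)
          · exact absurd (h ▸ rd_T1 hA) (by simpa using (rd_T2 hB).not_gt)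
          · exact absurd (h ▸ rd_T2 hA) (by simpa using (rd_T1 hB).not_gt)
          · exact ih (T2_cancel h)

lemma mem_range_aux : ∀ n : ℕ, ∀ M : Matrix (Fin 2) (Fin 2) ℤ, Good M →
    (M 0 0 + M 0 1 + M 1 0 + M 1 1).toNat ≤ n → ∃ w, toMatrix w = M := by
  intro n
  induction n with
  | zero =>
      intro M hM hle
      exfalso
      have := top_pos hM
      have h2 := hM.2 1 0
      have h3 := hM.2 1 1
      omega
  | succ n ih =>
      intro M hM hle
      rcases trichotomy M hM with h1 | ⟨N, hN, hMN, hlt⟩ | ⟨N, hN, hMN, hlt⟩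
      · exact ⟨1, by rw [map_one, h1]⟩
      · have hNle : (N 0 0 + N 0 1 + N 1 0 + N 1 1).toNat ≤ n := by
          have := hN.2 0 0; have := hN.2 0 1; have := hN.2 1 0; have := hN.2 1 1
          omega
        obtain ⟨w, hw⟩ := ih N hN hNle
        exact ⟨FreeMonoid.of 0 * w, by
          rw [map_mul, toMatrix_of, hw, if_pos rfl]; exact hMN.symm⟩
      · have hNle : (N 0 0 + N 0 1 + N 1 0 + N 1 1).toNat ≤ n := by
          have := hN.2 0 0; have := hN.2 0 1; have := hN.2 1 0; have := hN.2 1 1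
          omega
        obtain ⟨w, hw⟩ := ih N hN hNle
        exact ⟨FreeMonoid.of 1 * w, by
          rw [map_mul, toMatrix_of, hw, if_neg (by decide)]; exact hMN.symm⟩

/-- The monoid of 2×2 integer matrices with determinant 1 and nonnegative entries is free
on the generators `T₁`, `T₂`: the canonical map from the free monoid on two generators is
injective and its range is exactly the set of determinant-1 matrices with nonnegative
entries. -/
theorem unimodular_nonneg_matrices_free_on_T1_T2 :
    Function.Injective ⇑toMatrix ∧
      Set.range ⇑toMatrix =
        {M : Matrix (Fin 2) (Fin 2) ℤ | M.det = 1 ∧ ∀ i j, 0 ≤ M i j} := by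
  refine ⟨toMatrix_inj, Set.ext fun M => ⟨?_, ?_⟩⟩
  · rintro ⟨w, rfl⟩
    exact good_toMatrix w
  · intro hM
    exact mem_range_aux _ M hM le_rfl
end

section
/- Let α, β, m be real numbers with α > 0, β > 0, 0 < m < α + β, and α/β irrational. Then there exist positive integers u, y and nonnegative integers v, w such that 0 < u·α − v·β < m, 0 < y·β − w·α < m, and (u·α − v·β) + (y·β − w·α) > m. (These two quantities are the transversal measures of the m-dependent basic transversal cycles a^m(+) = u·a + v·b and b^m(+) = w·a + y·b on a 2-torus carrying a straight-line flow with basic transversal measures |a| = α, |b| = β and a removed transversal segment of measure m: each measure is less than m but their sum is greater than m.) -/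
/-- The subgroup of `ℝ` generated by two positive reals with irrational ratio is dense. -/
lemma dense_closure_pair_of_irrational (α β : ℝ) (hα : 0 < α) (hβ : 0 < β)
    (hirr : Irrational (α / β)) :
    Dense ((AddSubgroup.closure {α, β} : AddSubgroup ℝ) : Set ℝ) := by
  rcases AddSubgroup.dense_or_cyclic (AddSubgroup.closure {α, β}) with h | ⟨a, ha⟩
  · exact h
  · exfalso
    have hαmem : α ∈ AddSubgroup.closure ({α, β} : Set ℝ) :=
      AddSubgroup.subset_closure (by simp)
    have hβmem : β ∈ AddSubgroup.closure ({α, β} : Set ℝ) :=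
      AddSubgroup.subset_closure (by simp)
    rw [ha, AddSubgroup.mem_closure_singleton] at hαmem hβmem
    obtain ⟨n, hn⟩ := hαmem
    obtain ⟨k, hk⟩ := hβmem
    have ha0 : a ≠ 0 := by
      rintro rfl
      simp at hk
      linarith
    have hk0 : (k : ℝ) ≠ 0 := by
      rintro h
      rw [zsmul_eq_mul, h, zero_mul] at hk
      linarith
    refine hirr ⟨(n : ℚ) / (k : ℚ), ?_⟩
    push_cast
    rw [div_eq_div_iff hk0 hβ.ne', ← hn, ← hk]
    push_cast [zsmul_eq_mul]
    ring

/-- There are arbitrarily small positive elements of the form `u•α - v•β`, `u ≥ 1`, `v ≥ 0`. -/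
lemma exists_small_pos_comb (α β : ℝ) (hα : 0 < α) (hβ : 0 < β)
    (hirr : Irrational (α / β)) (ε : ℝ) (hε : 0 < ε) :
    ∃ u v : ℕ, 0 < u ∧ 0 < (u : ℝ) * α - (v : ℝ) * β ∧ (u : ℝ) * α - (v : ℝ) * β < ε := by
  set ε' : ℝ := min ε (min α β) with hε'def
  have hε' : 0 < ε' := lt_min hε (lt_min hα hβ)
  have hε'ε : ε' ≤ ε := min_le_left _ _
  have hε'α : ε' ≤ α := le_trans (min_le_right _ _) (min_le_left _ _)
  have hε'β : ε' ≤ β := le_trans (min_le_right _ _) (min_le_right _ _)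
  obtain ⟨g, hgmem, hg0, hgε⟩ :=
    (dense_closure_pair_of_irrational α β hα hβ hirr).exists_between hε'
  rename' hgε => hgε'
  rw [SetLike.mem_coe, AddSubgroup.mem_closure_pair] at hgmem
  obtain ⟨p, q, hpq⟩ := hgmem
  simp only [zsmul_eq_mul] at hpq
  rcases le_or_gt p 0 with hp | hp
  · -- p ≤ 0 ; then q ≥ 1 and g = q*β - (-p)*α ; use the floor trick
    have hq : 1 ≤ q := by
      by_contra h
      push_neg at h
      have hq0 : q ≤ 0 := by omega
      have : g ≤ 0 := by
        rw [← hpq]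
        have h1 : (p : ℝ) * α ≤ 0 :=
          mul_nonpos_of_nonpos_of_nonneg (by exact_mod_cast hp) hα.le
        have h2 : (q : ℝ) * β ≤ 0 :=
          mul_nonpos_of_nonpos_of_nonneg (by exact_mod_cast hq0) hβ.le
        linarith
      linarith
    set k : ℤ := ⌊α / g⌋ with hkdef
    have hk1 : 1 ≤ k := by
      rw [hkdef, Int.le_floor]
      push_cast
      exact (one_le_div hg0).mpr (hgε'.le.trans hε'α)
    have hkg : (k : ℝ) * g ≤ α := by
      have := Int.floor_le (α / g)
      calc (k : ℝ) * g ≤ (α / g) * g := by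
            apply mul_le_mul_of_nonneg_right _ hg0.le
            exact this
        _ = α := div_mul_cancel₀ α hg0.ne'
    have hkg' : α < ((k : ℝ) + 1) * g := by
      have := Int.lt_floor_add_one (α / g)
      calc α = (α / g) * g := (div_mul_cancel₀ α hg0.ne').symm
        _ < ((k : ℝ) + 1) * g := by
            apply mul_lt_mul_of_pos_right _ hg0
            exact_mod_cast this
    have hne : α - (k : ℝ) * g ≠ 0 := by
      intro h
      have heq : α = (k : ℝ) * ((p : ℝ) * α + (q : ℝ) * β) := by
        rw [hpq]; linarith
      have hden : (1 : ℤ) ≤ 1 - k * p := by nlinarith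
      refine hirr ⟨((k * q : ℤ) : ℚ) / ((1 - k * p : ℤ) : ℚ), ?_⟩
      have hden' : ((1 - k * p : ℤ) : ℝ) ≠ 0 := by
        exact_mod_cast (by omega : (1 - k * p : ℤ) ≠ 0)
      push_cast
      rw [div_eq_div_iff (by exact_mod_cast hden') hβ.ne']
      nlinarith [heq]
    refine ⟨(1 - k * p).toNat, (k * q).toNat, ?_, ?_, ?_⟩
    · have : (1 : ℤ) ≤ 1 - k * p := by nlinarith
      omega
    all_goals {
      have h1 : (1 : ℤ) ≤ 1 - k * p := by nlinarith
      have h2 : (0 : ℤ) ≤ k * q := by nlinarith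
      have e1 : (((1 - k * p).toNat : ℤ)) = 1 - k * p :=
        Int.toNat_of_nonneg (by omega)
      have e2 : (((k * q).toNat : ℤ)) = k * q := Int.toNat_of_nonneg h2
      have hc1 : (((1 - k * p).toNat : ℝ)) = 1 - (k : ℝ) * (p : ℝ) := by
        exact_mod_cast congrArg (fun z : ℤ => (z : ℝ)) e1
      have hc2 : (((k * q).toNat : ℝ)) = (k : ℝ) * (q : ℝ) := by
        exact_mod_cast congrArg (fun z : ℤ => (z : ℝ)) e2
      rw [hc1, hc2]
      have hval : (1 - (k : ℝ) * (p : ℝ)) * α - (k : ℝ) * (q : ℝ) * β = α - (k : ℝ) * g := by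
        rw [← hpq]; ring
      rw [hval]
      first
      | (rcases lt_or_gt_of_ne hne with h | h
         · exfalso; linarith
         · linarith)
      | (have : α - (k : ℝ) * g < g := by linarith
         linarith)
    }
  · -- p ≥ 1 ; then q ≤ 0 and g itself works
    have hq : q ≤ 0 := by
      by_contra h
      push_neg at h
      have h1 : (1 : ℝ) ≤ (p : ℝ) := by exact_mod_cast hp
      have h2 : (1 : ℝ) ≤ (q : ℝ) := by exact_mod_cast h
      nlinarith
    refine ⟨p.toNat, (-q).toNat, by omega, ?_, ?_⟩
    all_goals {
      have hc1 : ((p.toNat : ℝ)) = (p : ℝ) := by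
        exact_mod_cast Int.toNat_of_nonneg hp.le
      have hc2 : (((-q).toNat : ℝ)) = -(q : ℝ) := by
        exact_mod_cast Int.toNat_of_nonneg (by omega : (0:ℤ) ≤ -q)
      rw [hc1, hc2]
      have : (p : ℝ) * α - (-(q : ℝ)) * β = g := by rw [← hpq]; ring
      rw [this]
      linarith
    }

/-- Combinations `u•α - v•β` with `u ≥ 1`, `v ≥ 0` hit every interval `(a,b)` with `0 ≤ a < b`. -/
lemma exists_comb_in_Ioo (α β : ℝ) (hα : 0 < α) (hβ : 0 < β)
    (hirr : Irrational (α / β)) (a b : ℝ) (ha : 0 ≤ a) (hab : a < b) :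
    ∃ u v : ℕ, 0 < u ∧ a < (u : ℝ) * α - (v : ℝ) * β ∧ (u : ℝ) * α - (v : ℝ) * β < b := by
  obtain ⟨u, v, hu, hg0, hgε⟩ :=
    exists_small_pos_comb α β hα hβ hirr (b - a) (by linarith)
  set g : ℝ := (u : ℝ) * α - (v : ℝ) * β with hgdef
  set k : ℕ := ⌊a / g⌋₊ + 1 with hkdef
  have hk1 : a < (k : ℕ) * g := by
    have := Nat.lt_floor_add_one (a / g)
    calc a = (a / g) * g := (div_mul_cancel₀ a hg0.ne').symm
      _ < (k : ℝ) * g := by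
          apply mul_lt_mul_of_pos_right _ hg0
          push_cast [hkdef]
          exact this
  have hk2 : (k : ℝ) * g ≤ a + g := by
    have h1 : (⌊a / g⌋₊ : ℝ) ≤ a / g := Nat.floor_le (by positivity)
    have h2 : (⌊a / g⌋₊ : ℝ) * g ≤ a := by
      calc (⌊a / g⌋₊ : ℝ) * g ≤ (a / g) * g := mul_le_mul_of_nonneg_right h1 hg0.le
        _ = a := div_mul_cancel₀ a hg0.ne'
    push_cast [hkdef]
    linarith
  refine ⟨k * u, k * v, by positivity, ?_, ?_⟩
  · have : ((k * u : ℕ) : ℝ) * α - ((k * v : ℕ) : ℝ) * β = (k : ℝ) * g := by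
      push_cast [hgdef]; ring
    rw [this]; exact hk1
  · have : ((k * u : ℕ) : ℝ) * α - ((k * v : ℕ) : ℝ) * β = (k : ℝ) * g := by
      push_cast [hgdef]; ring
    rw [this]; linarith

/-- Let `α, β` be the transversal measures of the two basic transversal cycles of a
generic straight-line flow on the 2-torus and let `m` be the measure of a transversal
segment, with `0 < m < α + β` and `α/β` irrational. Then there are positive integers
`u, y` and nonnegative integers `v, w` such that the transversal measures
`u·α − v·β` and `y·β − w·α` of the `m`-dependent basic transversal cycles
`a^m(+) = u·a + v·b` and `b^m(+) = w·a + y·b` are each less than `m`, but their sum is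
greater than `m`. -/
theorem exists_m_dependent_basis_measures
    (α β m : ℝ) (hα : 0 < α) (hβ : 0 < β) (hm : 0 < m) (hm' : m < α + β)
    (hirr : Irrational (α / β)) :
    ∃ u v w y : ℕ, 0 < u ∧ 0 < y ∧
      0 < (u : ℝ) * α - (v : ℝ) * β ∧ (u : ℝ) * α - (v : ℝ) * β < m ∧
      0 < (y : ℝ) * β - (w : ℝ) * α ∧ (y : ℝ) * β - (w : ℝ) * α < m ∧
      m < ((u : ℝ) * α - (v : ℝ) * β) + ((y : ℝ) * β - (w : ℝ) * α) := by
  obtain ⟨u, v, hu, hx0, hxm⟩ :=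
    exists_comb_in_Ioo α β hα hβ hirr 0 m le_rfl hm
  set x : ℝ := (u : ℝ) * α - (v : ℝ) * β with hxdef
  have hirr' : Irrational (β / α) := by
    rw [← inv_div]
    exact irrational_inv_iff.mpr hirr
  obtain ⟨y, w, hy, hz1, hz2⟩ :=
    exists_comb_in_Ioo β α hβ hα hirr' (max (m - x) 0) m (le_max_right _ _)
      (max_lt (by linarith) hm)
  refine ⟨u, v, w, y, hu, hy, hx0, hxm, ?_, hz2, ?_⟩
  · exact lt_of_le_of_lt (le_max_right (m - x) 0) hz1
  · have := lt_of_le_of_lt (le_max_left (m - x) 0) hz1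
    linarith
end
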